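/- arXiv:2003.12330 — 6 statements merged into one kernel-verified Lean document; each statement's English description precedes it below -/
import Mathlib

section
/- Let P and A be real n×n matrices with P symmetric, suppose (1/2)(P·A + Aᵀ·P) ⪯ −I, and let L₂ > 0, ε ∈ (0,1). Let x, w ∈ ℝⁿ satisfy ‖w − Ax‖ ≤ L₂‖x‖² and ‖x‖ ≤ (1 − ε)/(L₂‖P‖). Then xᵀ P w ≤ −ε‖x‖². -/
open Matrix

/-- The ℓ² operator norm of a real matrix, i.e. the norm of the induced
continuous linear map on Euclidean space. -/
noncomputable def opNorm {n : ℕ} (P : Matrix (Fin n) (Fin n) ℝ) : ℝ :=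
  ‖Matrix.toEuclideanCLM (𝕜 := ℝ) P‖

/-- The bilinear pairing `xᵀ P w` on Euclidean space. -/
noncomputable def quadF {n : ℕ} (P : Matrix (Fin n) (Fin n) ℝ)
    (x w : EuclideanSpace ℝ (Fin n)) : ℝ :=
  inner ℝ x (Matrix.toEuclideanLin P w)

lemma inner_toEucLin {n : ℕ} (P : Matrix (Fin n) (Fin n) ℝ) (x y : EuclideanSpace ℝ (Fin n)) :
    (inner ℝ x (Matrix.toEuclideanLin P y) : ℝ)
      = (WithLp.equiv 2 _ x) ⬝ᵥ (P *ᵥ (WithLp.equiv 2 _ y)) := by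
  rw [EuclideanSpace.inner_eq_star_dotProduct]
  simp [Matrix.toLin'_apply, toEuclideanLin_apply, dotProduct_comm]

lemma symm_swap {n : ℕ} (M : Matrix (Fin n) (Fin n) ℝ) (v : Fin n → ℝ) :
    v ⬝ᵥ (Mᵀ *ᵥ v) = v ⬝ᵥ (M *ᵥ v) := by
  rw [Matrix.dotProduct_mulVec, Matrix.vecMul_transpose, dotProduct_comm]

/-- near-origin estimate, linearized form.
Let `P, A` be real `n × n` matrices with `P` symmetric and
`(1/2)(P A + Aᵀ P) ⪯ -I`, and let `L₂ > 0`, `ε ∈ (0,1)`. If `x, w ∈ ℝⁿ` satisfy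
`‖w - A x‖ ≤ L₂ ‖x‖²` and `‖x‖ ≤ (1-ε)/(L₂ ‖P‖)`, then `xᵀ P w ≤ -ε ‖x‖²`. -/
theorem near_origin_estimate {n : ℕ} (P A : Matrix (Fin n) (Fin n) ℝ)
    (hP : P.IsSymm)
    (hLMI : (-(1 : Matrix (Fin n) (Fin n) ℝ)
      - (1 / 2 : ℝ) • (P * A + Aᵀ * P)).PosSemidef)
    (L₂ ε : ℝ) (hL₂ : 0 < L₂) (hε0 : 0 < ε) (hε1 : ε < 1)
    (x w : EuclideanSpace ℝ (Fin n))
    (hw : ‖w - Matrix.toEuclideanLin A x‖ ≤ L₂ * ‖x‖ ^ 2)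
    (hx : ‖x‖ ≤ (1 - ε) / (L₂ * opNorm P)) :
    quadF P x w ≤ -ε * ‖x‖ ^ 2 := by
  set x' : Fin n → ℝ := WithLp.equiv 2 _ x with hx'
  have hopn : 0 ≤ opNorm P := norm_nonneg _
  rcases eq_or_lt_of_le hopn with h0 | h0
  · -- opNorm P = 0, so x = 0
    have : ‖x‖ ≤ 0 := by
      rw [← h0] at hx
      simpa using hx
    have hx0 : x = 0 := norm_eq_zero.mp (le_antisymm this (norm_nonneg _))
    subst hx0
    simp [quadF]
  · -- main case
    have hnormsq : x' ⬝ᵥ x' = ‖x‖ ^ 2 := by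
      have : (inner ℝ x x : ℝ) = ‖x‖ ^ 2 := real_inner_self_eq_norm_sq x
      rw [EuclideanSpace.inner_eq_star_dotProduct] at this
      simpa [hx'] using this
    -- quadratic form bound
    have hq := hLMI.dotProduct_mulVec_nonneg x'
    have h1 : x' ⬝ᵥ ((P * A) *ᵥ x') ≤ -‖x‖ ^ 2 := by
      have hswap : x' ⬝ᵥ ((Aᵀ * P) *ᵥ x') = x' ⬝ᵥ ((P * A) *ᵥ x') := by
        have : Aᵀ * P = (P * A)ᵀ := by rw [Matrix.transpose_mul, hP.eq]
        rw [this, symm_swap]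
      rw [Matrix.sub_mulVec, Matrix.neg_mulVec, Matrix.one_mulVec,
        Matrix.smul_mulVec, Matrix.add_mulVec] at hq
      simp only [star_trivial, dotProduct_sub, dotProduct_neg,
        dotProduct_smul, dotProduct_add, smul_eq_mul] at hq
      rw [hswap, hnormsq] at hq
      linarith
    -- split quadF
    set d : EuclideanSpace ℝ (Fin n) := w - Matrix.toEuclideanLin A x with hd
    have hsplit : quadF P x w = x' ⬝ᵥ ((P * A) *ᵥ x') + inner ℝ x (Matrix.toEuclideanLin P d) := by
      rw [quadF, inner_toEucLin, inner_toEucLin]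
      have hdw : (WithLp.equiv 2 (Fin n → ℝ)) d
          = (WithLp.equiv 2 (Fin n → ℝ)) w - A *ᵥ x' := by
        rw [hd]
        simp [piLp_ofLp_toEuclideanLin, Matrix.toLin'_apply, hx']
      rw [hdw, ← Matrix.mulVec_mulVec]
      rw [Matrix.mulVec_sub, dotProduct_sub]
      ring
    -- cross term bound
    have hcross : (inner ℝ x (Matrix.toEuclideanLin P d) : ℝ) ≤ ‖x‖ * (opNorm P * (L₂ * ‖x‖ ^ 2)) := by
      have h1 : (inner ℝ x (Matrix.toEuclideanLin P d) : ℝ)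
          ≤ ‖x‖ * ‖Matrix.toEuclideanLin P d‖ := real_inner_le_norm _ _
      have h2 : ‖Matrix.toEuclideanLin P d‖ ≤ opNorm P * ‖d‖ := by
        have : Matrix.toEuclideanLin P d = Matrix.toEuclideanCLM (𝕜 := ℝ) P d := by
          rw [← Matrix.coe_toEuclideanCLM_eq_toEuclideanLin]; rfl
        rw [this]
        exact (Matrix.toEuclideanCLM (𝕜 := ℝ) P).le_opNorm d
      have h3 : opNorm P * ‖d‖ ≤ opNorm P * (L₂ * ‖x‖ ^ 2) :=
        mul_le_mul_of_nonneg_left hw hopn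
      calc (inner ℝ x (Matrix.toEuclideanLin P d) : ℝ)
          ≤ ‖x‖ * ‖Matrix.toEuclideanLin P d‖ := h1
        _ ≤ ‖x‖ * (opNorm P * (L₂ * ‖x‖ ^ 2)) := by
            apply mul_le_mul_of_nonneg_left _ (norm_nonneg _)
            exact h2.trans h3
    -- key norm bound
    have hkey : L₂ * opNorm P * ‖x‖ ≤ 1 - ε := by
      have hpos : 0 < L₂ * opNorm P := mul_pos hL₂ h0
      rw [le_div_iff₀ hpos] at hx
      linarith
    have hxnn : (0:ℝ) ≤ ‖x‖ := norm_nonneg _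
    nlinarith [sq_nonneg ‖x‖, mul_le_mul_of_nonneg_right hkey (sq_nonneg ‖x‖)]
end

section
/- Let Ω ⊆ ℝⁿ be a convex set containing 0, let f : Ω → ℝⁿ satisfy f(0) = 0 and ‖f(u) − f(v)‖ ≤ L₁‖u − v‖ for all u, v ∈ Ω (with L₁ ≥ 0), and let P be a symmetric real n×n matrix. Let z ∈ Ω with z ≠ 0 satisfy zᵀ P f(z) ≤ −‖z‖², and let a ∈ ℝⁿ be such that z + a ∈ Ω and ‖a‖ < α‖z‖ for some α > 0. Then (z + a)ᵀ P f(z + a) < −‖z‖² (1 − 2‖P‖L₁α − ‖P‖L₁α²). -/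
/-- away-from-origin key estimate.
Let `Ω ⊆ ℝⁿ` be convex with `0 ∈ Ω`, let `f : Ω → ℝⁿ` satisfy `f 0 = 0` and be
`L₁`-Lipschitz on `Ω` (`L₁ ≥ 0`), and let `P` be symmetric. If `z ∈ Ω`, `z ≠ 0`
satisfies `zᵀ P f(z) ≤ -‖z‖²`, and `a` is such that `z + a ∈ Ω` and
`‖a‖ < α ‖z‖` for some `α > 0`, then
`(z+a)ᵀ P f(z+a) < -‖z‖² (1 - 2‖P‖ L₁ α - ‖P‖ L₁ α²)`. -/
theorem away_from_origin_key_estimate {n : ℕ}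
    (Ω : Set (EuclideanSpace ℝ (Fin n)))
    (hconv : Convex ℝ Ω) (h0 : (0 : EuclideanSpace ℝ (Fin n)) ∈ Ω)
    (f : EuclideanSpace ℝ (Fin n) → EuclideanSpace ℝ (Fin n))
    (hf0 : f 0 = 0)
    (L₁ : ℝ) (hL₁ : 0 ≤ L₁)
    (hlip : ∀ u ∈ Ω, ∀ v ∈ Ω, ‖f u - f v‖ ≤ L₁ * ‖u - v‖)
    (P : Matrix (Fin n) (Fin n) ℝ) (hP : P.IsSymm)
    (z : EuclideanSpace ℝ (Fin n)) (hz : z ∈ Ω) (hz0 : z ≠ 0)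
    (hzP : quadF P z (f z) ≤ -‖z‖ ^ 2)
    (a : EuclideanSpace ℝ (Fin n)) (hza : z + a ∈ Ω)
    (α : ℝ) (hα : 0 < α) (ha : ‖a‖ < α * ‖z‖) :
    quadF P (z + a) (f (z + a))
      < -‖z‖ ^ 2 * (1 - 2 * opNorm P * L₁ * α - opNorm P * L₁ * α ^ 2) := by
  have hzpos : 0 < ‖z‖ := norm_pos_iff.mpr hz0
  set C := opNorm P with hC
  have hC0 : 0 ≤ C := norm_nonneg _
  have hPw : ∀ w : EuclideanSpace ℝ (Fin n), ‖Matrix.toEuclideanLin P w‖ ≤ C * ‖w‖ := by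
    intro w
    have := (Matrix.toEuclideanCLM (𝕜 := ℝ) P).le_opNorm w
    rwa [show (Matrix.toEuclideanCLM (𝕜 := ℝ) P) w = Matrix.toEuclideanLin P w from
      congrFun (congrArg DFunLike.coe (Matrix.coe_toEuclideanCLM_eq_toEuclideanLin P)) w] at this
  -- degenerate case C * L₁ = 0
  rcases eq_or_lt_of_le (mul_nonneg hC0 hL₁) with hdeg | hpos
  · exfalso
    have hfz : ‖f z‖ ≤ L₁ * ‖z‖ := by
      have := hlip z hz 0 h0
      simpa [hf0] using this
    have h1 : |quadF P z (f z)| ≤ ‖z‖ * ‖Matrix.toEuclideanLin P (f z)‖ :=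
      abs_real_inner_le_norm _ _
    have h2 := hPw (f z)
    have h3 : ‖z‖ * ‖Matrix.toEuclideanLin P (f z)‖ ≤ ‖z‖ * (C * (L₁ * ‖z‖)) := by
      apply mul_le_mul_of_nonneg_left _ hzpos.le
      exact le_trans h2 (by nlinarith)
    have h4 : ‖z‖ * (C * (L₁ * ‖z‖)) = C * L₁ * (‖z‖ * ‖z‖) := by ring
    rw [← hdeg] at h4
    nlinarith [neg_abs_le (quadF P z (f z))]
  have hCpos : 0 < C := by
    rcases hC0.lt_or_eq with h | h
    · exact h
    · exfalso; rw [← h] at hpos; simp at hpos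
  have hLpos : 0 < L₁ := by nlinarith
  -- main case
  set w := f (z + a) with hw
  set d := w - f z with hd
  have hdle : ‖d‖ ≤ L₁ * ‖a‖ := by
    have := hlip (z + a) hza z hz
    simpa [hd, hw, add_sub_cancel_left] using this
  have hwle : ‖w‖ ≤ L₁ * (‖z‖ + ‖a‖) := by
    have h1 := hlip (z + a) hza 0 h0
    have h2 : ‖z + a‖ ≤ ‖z‖ + ‖a‖ := norm_add_le z a
    simp only [hf0, sub_zero] at h1
    calc ‖w‖ ≤ L₁ * ‖z + a‖ := h1
      _ ≤ L₁ * (‖z‖ + ‖a‖) := by nlinarith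
  have hsplit : quadF P (z + a) w = quadF P z (f z) + inner ℝ z (Matrix.toEuclideanLin P d)
      + quadF P a w := by
    simp only [quadF, hd, map_sub, inner_sub_right, inner_add_left]
    ring
  have ha0 : 0 ≤ ‖a‖ := norm_nonneg a
  have hb1 : inner ℝ z (Matrix.toEuclideanLin P d) < C * L₁ * α * ‖z‖ ^ 2 := by
    calc (inner ℝ z (Matrix.toEuclideanLin P d) : ℝ)
        ≤ ‖z‖ * ‖Matrix.toEuclideanLin P d‖ := real_inner_le_norm _ _
      _ ≤ ‖z‖ * (C * (L₁ * ‖a‖)) := by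
          have : ‖Matrix.toEuclideanLin P d‖ ≤ C * (L₁ * ‖a‖) :=
            le_trans (hPw d) (by nlinarith)
          exact mul_le_mul_of_nonneg_left this hzpos.le
      _ < ‖z‖ * (C * (L₁ * (α * ‖z‖))) := by gcongr
      _ = C * L₁ * α * ‖z‖ ^ 2 := by ring
  have hb2 : quadF P a w ≤ C * L₁ * α * (1 + α) * ‖z‖ ^ 2 := by
    have hw2 : ‖Matrix.toEuclideanLin P w‖ ≤ C * (L₁ * (‖z‖ + α * ‖z‖)) :=
      le_trans (hPw w) (by nlinarith)
    calc quadF P a w ≤ ‖a‖ * ‖Matrix.toEuclideanLin P w‖ := real_inner_le_norm _ _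
      _ ≤ (α * ‖z‖) * (C * (L₁ * (‖z‖ + α * ‖z‖))) := by
          apply mul_le_mul ha.le hw2 (norm_nonneg _) (by positivity)
      _ = C * L₁ * α * (1 + α) * ‖z‖ ^ 2 := by ring
  have hrhs : -‖z‖ ^ 2 * (1 - 2 * C * L₁ * α - C * L₁ * α ^ 2)
      = -‖z‖ ^ 2 + C * L₁ * α * ‖z‖ ^ 2 + C * L₁ * α * (1 + α) * ‖z‖ ^ 2 := by ring
  rw [hsplit, hrhs]
  linarith
end

section
/- Let f : ℝⁿ → ℝⁿ be differentiable at 0 with f(0) = 0, let P be a symmetric real n×n matrix, let ε > 0, and suppose there is a neighborhood N of 0 such that xᵀ P f(x) ≤ −ε‖x‖² for all x ∈ N. Then (1/2)(P·Df(0) + Df(0)ᵀ·P) ⪯ −εI. -/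
open Matrix

/-- The Jacobian matrix `Df(0)` of `f` at the origin:
`(Df(0))_{ij} = ∂f_i/∂x_j (0)`. -/
noncomputable def jacobianAtZero {n : ℕ}
    (f : EuclideanSpace ℝ (Fin n) → EuclideanSpace ℝ (Fin n)) :
    Matrix (Fin n) (Fin n) ℝ :=
  Matrix.of (fun i j => fderiv ℝ f 0 (EuclideanSpace.single j 1) i)

open Filter Topology

lemma quadF_eq {n : ℕ} (P : Matrix (Fin n) (Fin n) ℝ) (x w : EuclideanSpace ℝ (Fin n)) :
    quadF P x w = (WithLp.equiv 2 _ x) ⬝ᵥ P *ᵥ (WithLp.equiv 2 _ w) := by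
  simp [quadF, Matrix.toEuclideanLin_apply, PiLp.inner_apply, RCLike.inner_apply,
    dotProduct, mulVec]
  exact Finset.sum_congr rfl (fun _ _ => mul_comm _ _)

lemma jac_apply {n : ℕ} (f : EuclideanSpace ℝ (Fin n) → EuclideanSpace ℝ (Fin n))
    (x : EuclideanSpace ℝ (Fin n)) :
    Matrix.toEuclideanLin (jacobianAtZero f) x = fderiv ℝ f 0 x := by
  have hx : x = ∑ j, x j • EuclideanSpace.single j (1:ℝ) := by
    ext i
    rw [WithLp.ofLp_sum, Finset.sum_apply]
    simp [EuclideanSpace.single_apply]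
  conv_rhs => rw [hx]
  rw [map_sum]
  ext i
  rw [WithLp.ofLp_sum, Finset.sum_apply]
  simp [Matrix.toEuclideanLin_apply, mulVec, dotProduct, jacobianAtZero, mul_comm]

set_option maxHeartbeats 1000000 in
lemma key_ineq {n : ℕ}
    (f : EuclideanSpace ℝ (Fin n) → EuclideanSpace ℝ (Fin n))
    (hdiff : DifferentiableAt ℝ f 0) (hf0 : f 0 = 0)
    (P : Matrix (Fin n) (Fin n) ℝ)
    (ε : ℝ)
    (N : Set (EuclideanSpace ℝ (Fin n)))
    (hN : N ∈ nhds (0 : EuclideanSpace ℝ (Fin n)))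
    (hloc : ∀ x ∈ N, quadF P x (f x) ≤ -ε * ‖x‖ ^ 2)
    (x : EuclideanSpace ℝ (Fin n)) :
    quadF P x (fderiv ℝ f 0 x) ≤ -ε * ‖x‖ ^ 2 := by
  -- B : continuous linear functional w ↦ quadF P x w
  set B : EuclideanSpace ℝ (Fin n) →L[ℝ] ℝ :=
    ((innerSL ℝ x).comp (Matrix.toEuclideanLin P).toContinuousLinearMap) with hB
  have hBapp : ∀ w, B w = quadF P x w := by
    intro w
    simp [hB, quadF, innerSL_apply_apply]
  have h1 : HasDerivAt (fun t : ℝ => t • x) x 0 := by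
    simpa using (hasDerivAt_id (0:ℝ)).smul_const x
  have h2 : HasDerivAt (fun t : ℝ => f (t • x)) (fderiv ℝ f 0 x) 0 := by
    have h0 : ((0:ℝ) • x) = 0 := zero_smul _ _
    have hF : HasFDerivAt f (fderiv ℝ f 0) ((0:ℝ) • x) := h0 ▸ hdiff.hasFDerivAt
    exact hF.comp_hasDerivAt 0 h1
  have h3 : HasDerivAt (fun t : ℝ => quadF P x (f (t • x))) (quadF P x (fderiv ℝ f 0 x)) 0 := by
    simpa [hBapp, Function.comp_def] using (B.hasFDerivAt.comp_hasDerivAt 0 h2)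
  set φ : ℝ → ℝ := fun t => quadF P x (f (t • x)) with hφ
  have hφ0 : φ 0 = 0 := by simp [hφ, hf0, quadF]
  have hslope : Filter.Tendsto (slope φ 0) (nhdsWithin 0 {(0:ℝ)}ᶜ)
      (nhds (quadF P x (fderiv ℝ f 0 x))) := hasDerivAt_iff_tendsto_slope.mp h3
  have hslope' : Filter.Tendsto (slope φ 0) (nhdsWithin 0 (Set.Ioi 0))
      (nhds (quadF P x (fderiv ℝ f 0 x))) :=
    hslope.mono_left (nhdsWithin_mono _ (fun t ht => ne_of_gt ht))
  refine le_of_tendsto hslope' ?_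
  have hmem : ∀ᶠ t in nhdsWithin (0:ℝ) (Set.Ioi 0), t • x ∈ N := by
    have hc : Continuous (fun t : ℝ => t • x) := by continuity
    have : (fun t : ℝ => t • x) ⁻¹' N ∈ nhds (0:ℝ) := by
      have := hc.continuousAt (x := (0:ℝ))
      apply this
      simpa using hN
    exact eventually_nhdsWithin_of_eventually_nhds this
  filter_upwards [hmem, self_mem_nhdsWithin] with t htN ht
  have hq : quadF P (t • x) (f (t • x)) ≤ -ε * ‖t • x‖ ^ 2 := hloc _ htN
  have hlin : quadF P (t • x) (f (t • x)) = t * φ t := by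
    simp only [quadF, hφ, real_inner_smul_left]
  have hnorm : ‖t • x‖ ^ 2 = t ^ 2 * ‖x‖ ^ 2 := by
    rw [norm_smul]
    rw [Real.norm_eq_abs, mul_pow, sq_abs]
  have ht' : (0:ℝ) < t := ht
  have : t * φ t ≤ -ε * (t ^ 2 * ‖x‖ ^ 2) := by rw [← hlin, ← hnorm]; exact hq
  have hslope_eq : slope φ 0 t = φ t / t := by
    simp [slope, hφ0]
    ring
  rw [hslope_eq, div_le_iff₀ ht']
  nlinarith [this]

/-- local Lyapunov decrease implies the linearized LMI.
Let `f : ℝⁿ → ℝⁿ` be differentiable at `0` with `f 0 = 0`, `P` symmetric,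
`ε > 0`, and suppose `xᵀ P f(x) ≤ -ε ‖x‖²` for all `x` in some neighborhood `N`
of `0`. Then `(1/2)(P·Df(0) + Df(0)ᵀ·P) ⪯ -ε I`. -/
theorem lmi_from_local_decrease {n : ℕ}
    (f : EuclideanSpace ℝ (Fin n) → EuclideanSpace ℝ (Fin n))
    (hdiff : DifferentiableAt ℝ f 0) (hf0 : f 0 = 0)
    (P : Matrix (Fin n) (Fin n) ℝ) (hP : P.IsSymm)
    (ε : ℝ) (hε : 0 < ε)
    (N : Set (EuclideanSpace ℝ (Fin n)))
    (hN : N ∈ nhds (0 : EuclideanSpace ℝ (Fin n)))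
    (hloc : ∀ x ∈ N, quadF P x (f x) ≤ -ε * ‖x‖ ^ 2) :
    ((-ε) • (1 : Matrix (Fin n) (Fin n) ℝ)
      - (1 / 2 : ℝ) • (P * jacobianAtZero f + (jacobianAtZero f)ᵀ * P)).PosSemidef := by
  set A := jacobianAtZero f with hA
  set M : Matrix (Fin n) (Fin n) ℝ :=
    (-ε) • (1 : Matrix (Fin n) (Fin n) ℝ) - (1/2 : ℝ) • (P * A + Aᵀ * P) with hM
  -- key quadratic inequality in dot-product form
  have key : ∀ y : Fin n → ℝ, y ⬝ᵥ (P *ᵥ (A *ᵥ y)) ≤ -ε * (y ⬝ᵥ y) := by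
    intro y
    set x : EuclideanSpace ℝ (Fin n) := (WithLp.equiv 2 (Fin n → ℝ)).symm y with hx
    have h1 := key_ineq f hdiff hf0 P ε N hN hloc x
    rw [← jac_apply f x, quadF_eq] at h1
    have hxn : ‖x‖ ^ 2 = y ⬝ᵥ y := by
      rw [← real_inner_self_eq_norm_sq]
      simp [PiLp.inner_apply, RCLike.inner_apply, dotProduct, hx]
      rw [EuclideanSpace.real_norm_sq_eq]; simp [sq]
    rw [hxn] at h1
    have hxy : (WithLp.equiv 2 (Fin n → ℝ)) x = y := by simp [hx]
    rw [hxy] at h1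
    have heq : (WithLp.equiv 2 (Fin n → ℝ)) (Matrix.toEuclideanLin A x) = A *ᵥ y := by
      rw [Matrix.toEuclideanLin_apply]
      simp [hx]
    rw [heq] at h1
    exact h1
  have hsymM : Mᵀ = M := by
    simp [hM, Matrix.transpose_sub, Matrix.transpose_smul, Matrix.transpose_add,
      Matrix.transpose_mul, Matrix.transpose_one, Matrix.transpose_transpose, hP.eq, add_comm]
  rw [Matrix.posSemidef_iff_dotProduct_mulVec]
  constructor
  · ext i j
    simp only [Matrix.conjTranspose_apply, star_trivial]
    exact congrFun (congrFun hsymM i) j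
  · intro y
    have hq := key y
    have e0 : star y = y := by simp
    rw [e0]
    have e1 : y ⬝ᵥ ((Aᵀ * P) *ᵥ y) = y ⬝ᵥ (P *ᵥ (A *ᵥ y)) := by
      rw [← Matrix.mulVec_mulVec, Matrix.dotProduct_mulVec y Aᵀ, Matrix.vecMul_transpose,
        dotProduct_comm]
      nth_rewrite 1 [← hP.eq]
      rw [Matrix.mulVec_transpose, ← Matrix.dotProduct_mulVec]
    have expand : y ⬝ᵥ (M *ᵥ y)
        = -ε * (y ⬝ᵥ y) - (1/2 : ℝ) * (y ⬝ᵥ ((P * A) *ᵥ y) + y ⬝ᵥ ((Aᵀ * P) *ᵥ y)) := by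
      simp [hM, Matrix.neg_mulVec, dotProduct_neg, Matrix.sub_mulVec, Matrix.add_mulVec, Matrix.smul_mulVec,
        Matrix.one_mulVec, dotProduct_sub, dotProduct_add,
        dotProduct_smul, smul_eq_mul, mul_add]
    rw [expand, e1, ← Matrix.mulVec_mulVec] at *
    linarith
end

section
/- Let Ω ⊆ ℝⁿ be a set with 0 in its interior, let f : ℝⁿ → ℝⁿ be differentiable at 0 with f(0) = 0, let P be a symmetric real n×n matrix with P ⪰ I, and let ε ∈ (0,1] be such that xᵀ P f(x) ≤ −ε‖x‖² for all x ∈ Ω. Then the scaled matrix P' := ε⁻¹ P satisfies: (i) zᵀ P' f(z) ≤ −‖z‖² for all z ∈ Ω; (ii) (1/2)(P'·Df(0) + Df(0)ᵀ·P') ⪯ −I; and (iii) P' ⪰ I. -/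
open Matrix

lemma quadF_eq_dot {n : ℕ} (P : Matrix (Fin n) (Fin n) ℝ)
    (x w : EuclideanSpace ℝ (Fin n)) :
    quadF P x w = (fun i => x i) ⬝ᵥ (P *ᵥ fun j => w j) := by
  simp [quadF, PiLp.inner_apply, toEuclideanLin_apply, dotProduct, RCLike.inner_apply]
  exact Finset.sum_congr rfl fun i _ => mul_comm _ _

lemma quadF_smul_left {n : ℕ} (P : Matrix (Fin n) (Fin n) ℝ) (c : ℝ)
    (x w : EuclideanSpace ℝ (Fin n)) :
    quadF P (c • x) w = c * quadF P x w := by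
  simp [quadF, real_inner_smul_left, PiLp.inner_apply, RCLike.inner_apply,
    Finset.mul_sum, mul_assoc]
  exact Finset.sum_congr rfl fun i _ => by ring

lemma quadF_smul_right {n : ℕ} (P : Matrix (Fin n) (Fin n) ℝ) (c : ℝ)
    (x w : EuclideanSpace ℝ (Fin n)) :
    quadF P x (c • w) = c * quadF P x w := by
  simp [quadF, real_inner_smul_right, PiLp.inner_apply, RCLike.inner_apply,
    Finset.mul_sum, mul_left_comm]
  exact Finset.sum_congr rfl fun i _ => by ring

lemma quadF_smul_mat {n : ℕ} (P : Matrix (Fin n) (Fin n) ℝ) (c : ℝ)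
    (x w : EuclideanSpace ℝ (Fin n)) :
    quadF (c • P) x w = c * quadF P x w := by
  simp [quadF, _root_.map_smul, real_inner_smul_right, PiLp.inner_apply,
    RCLike.inner_apply, Finset.mul_sum, mul_left_comm]
  exact Finset.sum_congr rfl fun i _ => by ring

lemma toEuclideanLin_jacobian {n : ℕ}
    (f : EuclideanSpace ℝ (Fin n) → EuclideanSpace ℝ (Fin n))
    (v : EuclideanSpace ℝ (Fin n)) :
    Matrix.toEuclideanLin (jacobianAtZero f) v = fderiv ℝ f 0 v := by
  have h : (Matrix.toEuclideanLin (jacobianAtZero f) : EuclideanSpace ℝ (Fin n) →ₗ[ℝ] _)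
      = (fderiv ℝ f 0).toLinearMap := by
    apply (EuclideanSpace.basisFun (Fin n) ℝ).toBasis.ext
    intro j
    ext i
    simp [toEuclideanLin_apply, jacobianAtZero, mulVec, dotProduct,
      EuclideanSpace.basisFun_apply, EuclideanSpace.single_apply, mul_comm]
  exact DFunLike.congr_fun h v

/-- The limit argument: the Lyapunov inequality near `0` yields the linearized inequality. -/
lemma quad_fderiv_le {n : ℕ}
    (Ω : Set (EuclideanSpace ℝ (Fin n)))
    (h0 : (0 : EuclideanSpace ℝ (Fin n)) ∈ interior Ω)
    (f : EuclideanSpace ℝ (Fin n) → EuclideanSpace ℝ (Fin n))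
    (hdiff : DifferentiableAt ℝ f 0) (hf0 : f 0 = 0)
    (P : Matrix (Fin n) (Fin n) ℝ)
    (ε : ℝ) (hε0 : 0 < ε)
    (hlyap : ∀ x ∈ Ω, quadF P x (f x) ≤ -ε * ‖x‖ ^ 2)
    (v : EuclideanSpace ℝ (Fin n)) :
    quadF P v (fderiv ℝ f 0 v) ≤ -ε * ‖v‖ ^ 2 := by
  set A := fderiv ℝ f 0 with hA
  -- derivative of t ↦ f (t • v) at 0 is A v
  have h1 : HasDerivAt (fun t : ℝ => t • v) v 0 := by
    simpa using (hasDerivAt_id (0 : ℝ)).smul_const v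
  have h2 : HasDerivAt (fun t : ℝ => f (t • v)) (A v) 0 := by
    have hf : HasFDerivAt f A ((fun t : ℝ => t • v) 0) := by
      simpa using hdiff.hasFDerivAt
    exact hf.comp_hasDerivAt 0 h1
  have hslope : Filter.Tendsto (slope (fun t : ℝ => f (t • v)) 0)
      (nhdsWithin 0 {(0:ℝ)}ᶜ) (nhds (A v)) :=
    hasDerivAt_iff_tendsto_slope.mp h2
  have hQcont : Continuous (fun w : EuclideanSpace ℝ (Fin n) => quadF P v w) := by
    have hc : Continuous (fun w : EuclideanSpace ℝ (Fin n) => Matrix.toEuclideanLin P w) :=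
      LinearMap.continuous_of_finiteDimensional _
    exact Continuous.inner (𝕜 := ℝ) continuous_const hc
  have htend : Filter.Tendsto
      (fun t : ℝ => quadF P v (slope (fun s : ℝ => f (s • v)) 0 t))
      (nhdsWithin 0 {(0:ℝ)}ᶜ) (nhds (quadF P v (A v))) :=
    (hQcont.tendsto _).comp hslope
  have hsub : nhdsWithin (0:ℝ) (Set.Ioi 0) ≤ nhdsWithin 0 {(0:ℝ)}ᶜ :=
    nhdsWithin_mono 0 (fun t ht => ne_of_gt ht)
  have htend' := htend.mono_left hsub
  -- eventually the inequality holds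
  have hmem : ∀ᶠ t in nhdsWithin (0:ℝ) (Set.Ioi 0), t • v ∈ Ω := by
    have hc : ContinuousAt (fun t : ℝ => t • v) 0 :=
      (continuous_id.smul continuous_const).continuousAt
    have h3 : interior Ω ∈ nhds ((fun t : ℝ => t • v) 0) := by
      simpa using isOpen_interior.mem_nhds h0
    have h4 : ∀ᶠ t in nhds (0:ℝ), t • v ∈ interior Ω := hc.preimage_mem_nhds h3
    exact Filter.Eventually.filter_mono nhdsWithin_le_nhds
      (h4.mono fun t ht => interior_subset ht)
  have hev : ∀ᶠ t in nhdsWithin (0:ℝ) (Set.Ioi 0),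
      quadF P v (slope (fun s : ℝ => f (s • v)) 0 t) ≤ -ε * ‖v‖ ^ 2 := by
    filter_upwards [hmem, self_mem_nhdsWithin] with t htΩ ht
    have ht0 : (0:ℝ) < t := ht
    have hslope_eq : slope (fun s : ℝ => f (s • v)) 0 t = t⁻¹ • f (t • v) := by
      simp [slope, hf0]
    rw [hslope_eq, quadF_smul_right]
    have hle := hlyap (t • v) htΩ
    have hv : quadF P (t • v) (f (t • v)) = t * quadF P v (f (t • v)) :=
      quadF_smul_left P t v (f (t • v))
    have hnorm : ‖t • v‖ ^ 2 = t ^ 2 * ‖v‖ ^ 2 := by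
      rw [norm_smul]
      rw [Real.norm_eq_abs, abs_of_pos ht0]
      ring
    rw [hv, hnorm] at hle
    have ht' : (0:ℝ) < t⁻¹ := inv_pos.mpr ht0
    have h5 := mul_le_mul_of_nonneg_left hle (mul_nonneg ht'.le ht'.le)
    have e1 : t⁻¹ * t⁻¹ * (t * quadF P v (f (t • v))) = t⁻¹ * quadF P v (f (t • v)) := by
      field_simp
    have e2 : t⁻¹ * t⁻¹ * (-ε * (t ^ 2 * ‖v‖ ^ 2)) = -ε * ‖v‖ ^ 2 := by
      field_simp
    rw [e1, e2] at h5
    exact h5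
  exact le_of_tendsto htend' hev

/-- converse direction of the grid-sufficiency theorem.
Let `Ω ⊆ ℝⁿ` have `0` in its interior, `f : ℝⁿ → ℝⁿ` differentiable at `0`
with `f 0 = 0`, `P` symmetric with `P ⪰ I`, and `ε ∈ (0,1]` such that
`xᵀ P f(x) ≤ -ε ‖x‖²` on `Ω`. Then `P' := ε⁻¹ P` satisfies
(i) `zᵀ P' f(z) ≤ -‖z‖²` on `Ω`;
(ii) `(1/2)(P'·Df(0) + Df(0)ᵀ·P') ⪯ -I`;
(iii) `P' ⪰ I`. -/
theorem scaled_certificate {n : ℕ}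
    (Ω : Set (EuclideanSpace ℝ (Fin n)))
    (h0 : (0 : EuclideanSpace ℝ (Fin n)) ∈ interior Ω)
    (f : EuclideanSpace ℝ (Fin n) → EuclideanSpace ℝ (Fin n))
    (hdiff : DifferentiableAt ℝ f 0) (hf0 : f 0 = 0)
    (P : Matrix (Fin n) (Fin n) ℝ) (hP : P.IsSymm)
    (hPI : (P - 1).PosSemidef)
    (ε : ℝ) (hε0 : 0 < ε) (hε1 : ε ≤ 1)
    (hlyap : ∀ x ∈ Ω, quadF P x (f x) ≤ -ε * ‖x‖ ^ 2) :
    (∀ z ∈ Ω, quadF (ε⁻¹ • P) z (f z) ≤ -‖z‖ ^ 2) ∧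
    ((-(1 : Matrix (Fin n) (Fin n) ℝ)
      - (1 / 2 : ℝ) • ((ε⁻¹ • P) * jacobianAtZero f
        + (jacobianAtZero f)ᵀ * (ε⁻¹ • P))).PosSemidef) ∧
    ((ε⁻¹ • P) - 1).PosSemidef := by
  have hεinv : (0:ℝ) < ε⁻¹ := inv_pos.mpr hε0
  have hεinv1 : (1:ℝ) ≤ ε⁻¹ := (one_le_inv_iff₀).mpr ⟨hε0, hε1⟩
  set J := jacobianAtZero f with hJ
  set P' := ε⁻¹ • P with hP'
  have hPsymm : Pᵀ = P := hP
  have hP'symm : P'ᵀ = P' := by rw [hP', transpose_smul, hPsymm]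
  refine ⟨?_, ?_, ?_⟩
  · intro z hz
    rw [quadF_smul_mat]
    have := hlyap z hz
    calc ε⁻¹ * quadF P z (f z) ≤ ε⁻¹ * (-ε * ‖z‖ ^ 2) := by
          exact mul_le_mul_of_nonneg_left this (le_of_lt hεinv)
      _ = -‖z‖ ^ 2 := by field_simp
  · -- part (ii)
    have hkey : ∀ v : EuclideanSpace ℝ (Fin n),
        quadF P' v (Matrix.toEuclideanLin J v) ≤ -‖v‖ ^ 2 := by
      intro v
      rw [hP', quadF_smul_mat, hJ, toEuclideanLin_jacobian]
      have := quad_fderiv_le Ω h0 f hdiff hf0 P ε hε0 hlyap v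
      calc ε⁻¹ * quadF P v (fderiv ℝ f 0 v) ≤ ε⁻¹ * (-ε * ‖v‖ ^ 2) :=
            mul_le_mul_of_nonneg_left this (le_of_lt hεinv)
        _ = -‖v‖ ^ 2 := by field_simp
    refine Matrix.PosSemidef.of_dotProduct_mulVec_nonneg ?_ ?_
    · -- Hermitian
      unfold Matrix.IsHermitian
      rw [show ∀ M : Matrix (Fin n) (Fin n) ℝ, Mᴴ = Mᵀ from fun M => rfl]
      rw [transpose_sub, transpose_smul, transpose_add, transpose_mul, transpose_mul,
        transpose_transpose, hP'symm, transpose_neg, transpose_one,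
        add_comm (Jᵀ * P') (P' * J)]
    · intro x
      -- quadratic form
      set v : EuclideanSpace ℝ (Fin n) := (WithLp.equiv 2 (Fin n → ℝ)).symm x with hv
      have hx : (fun i => v i) = x := rfl
      have hdot1 : x ⬝ᵥ ((P' * J) *ᵥ x) = quadF P' v (Matrix.toEuclideanLin J v) := by
        rw [quadF_eq_dot, hx]
        rw [← mulVec_mulVec]
        congr 1
      have hvm : ∀ a : Fin n → ℝ, a ᵥ* P' = P' *ᵥ a := by
        intro a
        nth_rewrite 1 [← hP'symm]
        rw [vecMul_transpose]
      have hdot2 : x ⬝ᵥ ((Jᵀ * P') *ᵥ x) = quadF P' v (Matrix.toEuclideanLin J v) := by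
        rw [← mulVec_mulVec, dotProduct_mulVec, vecMul_transpose, dotProduct_comm,
          ← hvm x, ← dotProduct_mulVec]
        rw [quadF_eq_dot, hx]
        congr 1
      have hnx : x ⬝ᵥ x = ‖v‖ ^ 2 := by
        rw [← real_inner_self_eq_norm_sq]
        simp [-real_inner_self_eq_norm_sq, PiLp.inner_apply, dotProduct, RCLike.inner_apply]
        rw [EuclideanSpace.norm_eq, Real.sq_sqrt (Finset.sum_nonneg fun i _ => sq_nonneg _)]
        exact Finset.sum_congr rfl fun i _ => by rw [Real.norm_eq_abs, sq_abs, sq]; rfl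
      have hq := hkey v
      have hstar : star x = x := rfl
      rw [hstar]
      have hexp : x ⬝ᵥ ((-(1 : Matrix (Fin n) (Fin n) ℝ)
          - (1 / 2 : ℝ) • (P' * J + Jᵀ * P')) *ᵥ x)
          = -(x ⬝ᵥ x) - (1/2) * (x ⬝ᵥ ((P' * J) *ᵥ x) + x ⬝ᵥ ((Jᵀ * P') *ᵥ x)) := by
        rw [sub_mulVec, neg_mulVec, one_mulVec, smul_mulVec, add_mulVec,
          dotProduct_sub, dotProduct_neg, dotProduct_smul, dotProduct_add]
        simp [smul_eq_mul]
      rw [hexp, hdot1, hdot2, hnx]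
      nlinarith [hq]
  · -- part (iii)
    refine Matrix.PosSemidef.of_dotProduct_mulVec_nonneg ?_ ?_
    · unfold Matrix.IsHermitian
      rw [show ∀ M : Matrix (Fin n) (Fin n) ℝ, Mᴴ = Mᵀ from fun M => rfl]
      rw [transpose_sub, hP'symm, transpose_one]
    · intro x
      have hstar : star x = x := rfl
      rw [hstar]
      have h1 := hPI.dotProduct_mulVec_nonneg x
      rw [show star x = x from rfl] at h1
      rw [sub_mulVec, one_mulVec, dotProduct_sub] at h1 ⊢
      rw [hP', smul_mulVec, dotProduct_smul, smul_eq_mul]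
      have hxx : (0:ℝ) ≤ x ⬝ᵥ x := by
        simp [dotProduct]
        exact Finset.sum_nonneg fun i _ => mul_self_nonneg _
      nlinarith
end

section
/- Let H be a real Hilbert space, let v₁, …, v_k ∈ H, and let T : H → ℝ^k be the continuous linear map T(g) := (⟨g, v₁⟩, …, ⟨g, v_k⟩). Let C ⊆ ℝ^k be a closed convex set such that the feasible set F := {g ∈ H : T(g) ∈ C} is nonempty, let ℓ : ℝ^k → ℝ be a continuous convex function, and let λ > 0. Then the optimization problem min_{g ∈ F} ℓ(T(g)) + λ‖g‖²_H has a unique solution g*, and g* lies in the finite-dimensional subspace span{v₁, …, v_k}. -/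
open scoped RealInnerProductSpace

set_option maxHeartbeats 2000000 in
/-- abstract representer theorem with closed convex
constraints. Let `H` be a real Hilbert space, `v₁, …, v_k ∈ H`, and
`T g := (⟪g, v₁⟫, …, ⟪g, v_k⟫)`. Let `C ⊆ ℝᵏ` be closed and convex with
`{g : T g ∈ C}` nonempty, `ℓ : ℝᵏ → ℝ` continuous and convex, and `λ > 0`.
Then `min_{T g ∈ C} ℓ(T g) + λ ‖g‖²` has a unique solution `g*`, and
`g* ∈ span{v₁, …, v_k}`. -/
theorem representer_theorem {H : Type*} [NormedAddCommGroup H]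
    [InnerProductSpace ℝ H] [CompleteSpace H]
    {k : ℕ} (v : Fin k → H)
    (C : Set (Fin k → ℝ)) (hCcl : IsClosed C) (hCconv : Convex ℝ C)
    (l : (Fin k → ℝ) → ℝ) (hlcont : Continuous l)
    (hlconv : ConvexOn ℝ Set.univ l)
    (lam : ℝ) (hlam : 0 < lam)
    (hfeas : ∃ g : H, (fun i => ⟪g, v i⟫) ∈ C) :
    ∃ gstar : H,
      (fun i => ⟪gstar, v i⟫) ∈ C ∧
      gstar ∈ Submodule.span ℝ (Set.range v) ∧
      (∀ g : H, (fun i => ⟪g, v i⟫) ∈ C →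
        l (fun i => ⟪gstar, v i⟫) + lam * ‖gstar‖ ^ 2
          ≤ l (fun i => ⟪g, v i⟫) + lam * ‖g‖ ^ 2) ∧
      (∀ g : H, (fun i => ⟪g, v i⟫) ∈ C →
        (∀ g' : H, (fun i => ⟪g', v i⟫) ∈ C →
          l (fun i => ⟪g, v i⟫) + lam * ‖g‖ ^ 2
            ≤ l (fun i => ⟪g', v i⟫) + lam * ‖g'‖ ^ 2) →
        g = gstar) := by
  classical
  set T : H →L[ℝ] (Fin k → ℝ) := ContinuousLinearMap.pi (fun i => innerSL ℝ (v i)) with hT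
  have hTapp : ∀ g : H, (fun i => ⟪g, v i⟫) = T g := by
    intro g; funext i; simp [hT, real_inner_comm]
  set V := Submodule.span ℝ (Set.range v) with hV
  haveI : FiniteDimensional ℝ V := FiniteDimensional.span_of_finite ℝ (Set.finite_range v)
  -- projection preserves T
  have hproj : ∀ g : H, T ((V.orthogonalProjectionOnto g : H)) = T g := by
    intro g; funext i
    have hv : v i ∈ V := Submodule.subset_span ⟨i, rfl⟩
    have horth : g - (V.orthogonalProjectionOnto g : H) ∈ Vᗮ :=
      V.sub_starProjection_mem_orthogonal g
    have h0 : ⟪v i, g - (V.orthogonalProjectionOnto g : H)⟫ = 0 :=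
      (Submodule.mem_orthogonal V _).mp horth _ hv
    rw [inner_sub_right, sub_eq_zero] at h0
    simpa [hT] using h0.symm
  have hprojn : ∀ g : H, ‖(V.orthogonalProjectionOnto g : H)‖ ≤ ‖g‖ := by
    intro g
    calc ‖(V.orthogonalProjectionOnto g : H)‖ = ‖V.orthogonalProjectionOnto g‖ := rfl
      _ ≤ ‖V.orthogonalProjectionOnto‖ * ‖g‖ := (V.orthogonalProjectionOnto).le_opNorm g
      _ ≤ 1 * ‖g‖ := by
          exact mul_le_mul_of_nonneg_right (Submodule.orthogonalProjectionOnto_norm_le V) (norm_nonneg g)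
      _ = ‖g‖ := one_mul _
  -- affine lower bound for l
  obtain ⟨c, hc1, hcl⟩ : ∃ c : ℝ, 1 ≤ c ∧ ∀ y, -(c * (‖y‖ + 1)) ≤ l y := by
    obtain ⟨ym, hym, hmin⟩ := (isCompact_closedBall (0 : Fin k → ℝ) 1).exists_isMinOn
      ⟨0, Metric.mem_closedBall_self zero_le_one⟩ hlcont.continuousOn
    set m := l ym with hm
    refine ⟨|m| + |l 0| + 1, by linarith [abs_nonneg m, abs_nonneg (l 0)], fun y => ?_⟩
    have habsm : -(|m| + |l 0| + 1) ≤ m := by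
      have := neg_abs_le m; nlinarith [abs_nonneg (l 0)]
    by_cases hy : ‖y‖ ≤ 1
    · have : m ≤ l y := hmin (by simpa [Metric.mem_closedBall, dist_eq_norm] using hy)
      nlinarith [norm_nonneg y, abs_nonneg m, abs_nonneg (l 0)]
    · push_neg at hy
      have hn0 : (0:ℝ) < ‖y‖ := by linarith
      set t : ℝ := 1 / ‖y‖ with ht
      have ht0 : 0 < t := by positivity
      have ht1 : t ≤ 1 := by rw [ht, div_le_one hn0]; linarith
      have hnt : ‖y‖ * t = 1 := by rw [ht, mul_one_div_cancel hn0.ne']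
      have hcv := hlconv.2 (Set.mem_univ (0 : Fin k → ℝ)) (Set.mem_univ y)
        (by linarith : (0:ℝ) ≤ 1 - t) (le_of_lt ht0) (by ring)
      rw [smul_zero, zero_add] at hcv
      have hu : ‖t • y‖ ≤ 1 := by
        rw [norm_smul, Real.norm_eq_abs, abs_of_pos ht0, mul_comm]
        rw [hnt]
      have hmu : m ≤ l (t • y) := hmin (by simpa [Metric.mem_closedBall, dist_eq_norm] using hu)
      have key : ‖y‖ * m ≤ ‖y‖ * ((1 - t) * l 0 + t * l y) :=
        mul_le_mul_of_nonneg_left (hmu.trans hcv) (le_of_lt hn0)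
      have expand : ‖y‖ * ((1 - t) * l 0 + t * l y) = (‖y‖ - 1) * l 0 + l y := by
        rw [ht]; field_simp
      have key2 : ‖y‖ * m ≤ (‖y‖ - 1) * l 0 + l y := key.trans expand.le
      have p1 : ‖y‖ * -|m| ≤ ‖y‖ * m :=
        mul_le_mul_of_nonneg_left (neg_abs_le m) hn0.le
      have p2 : (‖y‖ - 1) * l 0 ≤ (‖y‖ - 1) * |l 0| :=
        mul_le_mul_of_nonneg_left (le_abs_self (l 0)) (by linarith)
      have p3 : -((|m| + |l 0| + 1) * (‖y‖ + 1)) ≤ ‖y‖ * -|m| - (‖y‖ - 1) * |l 0| := by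
        nlinarith [abs_nonneg m, abs_nonneg (l 0)]
      linarith
  -- the objective
  set F : H → ℝ := fun g => l (T g) + lam * ‖g‖ ^ 2 with hF
  have hFcont : Continuous F :=
    (hlcont.comp T.continuous).add (continuous_const.mul ((continuous_norm).pow 2))
  obtain ⟨g₀, hg₀⟩ := hfeas
  rw [hTapp] at hg₀
  set x₀ : V := V.orthogonalProjectionOnto g₀ with hx₀
  have hx₀C : T (x₀ : H) ∈ C := by rw [hproj]; exact hg₀
  -- the compact sublevel set
  set K : Set V := {x | T (x : H) ∈ C ∧ F (x : H) ≤ F (x₀ : H)} with hK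
  have hx₀K : x₀ ∈ K := ⟨hx₀C, le_refl _⟩
  have hKclosed : IsClosed K := by
    have h1 : Continuous fun x : V => T (x : H) := T.continuous.comp continuous_subtype_val
    have h2 : Continuous fun x : V => F (x : H) := hFcont.comp continuous_subtype_val
    exact (hCcl.preimage h1).inter (isClosed_Iic.preimage h2)
  have hKbdd : ∃ R : ℝ, ∀ x ∈ K, ‖x‖ ≤ R := by
    refine ⟨max 1 ((|F (x₀ : H)| + c * ‖T‖ + c) / lam), fun x hx => ?_⟩
    have hxn : ‖(x : H)‖ = ‖x‖ := rfl
    have h1 : -(c * (‖T (x : H)‖ + 1)) ≤ l (T (x : H)) := hcl _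
    have h2 : ‖T (x : H)‖ ≤ ‖T‖ * ‖x‖ := by rw [← hxn]; exact T.le_opNorm _
    have hFx₀ : F (x₀ : H) = l (T (x₀ : H)) + lam * ‖(x₀ : H)‖ ^ 2 := rfl
    have h3 : lam * ‖x‖ ^ 2 ≤ F (x₀ : H) + c * ‖T‖ * ‖x‖ + c := by
      have := hx.2
      rw [hF] at this
      simp only [hxn] at this
      nlinarith [mul_le_mul_of_nonneg_left h2 (by linarith : (0:ℝ) ≤ c), hFx₀]
    by_cases hx1 : ‖x‖ ≤ 1
    · exact hx1.trans (le_max_left _ _)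
    · push_neg at hx1
      refine le_trans ?_ (le_max_right _ _)
      rw [le_div_iff₀ hlam]
      have hTn : (0:ℝ) ≤ ‖T‖ := norm_nonneg _
      nlinarith [h3, le_abs_self (F (x₀ : H)),
        mul_nonneg (abs_nonneg (F (x₀ : H))) (by linarith : (0:ℝ) ≤ ‖x‖ - 1),
        mul_nonneg (by linarith : (0:ℝ) ≤ c) (by linarith : (0:ℝ) ≤ ‖x‖ - 1),
        (by linarith : (0:ℝ) < ‖x‖)]
  obtain ⟨R, hR⟩ := hKbdd
  have hKcompact : IsCompact K := by
    have : K ⊆ Metric.closedBall (0 : V) R := fun x hx => by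
      simpa [Metric.mem_closedBall, dist_eq_norm] using hR x hx
    exact (isCompact_closedBall (0 : V) R).of_isClosed_subset hKclosed this
  obtain ⟨xs, hxsK, hxsmin⟩ := hKcompact.exists_isMinOn ⟨x₀, hx₀K⟩
    ((hFcont.comp continuous_subtype_val).continuousOn)
  -- global minimality over H
  have hglobal : ∀ g : H, T g ∈ C → F (xs : H) ≤ F g := by
    intro g hg
    set y : V := V.orthogonalProjectionOnto g with hy
    have hyC : T (y : H) ∈ C := by rw [hproj]; exact hg
    have hyF : F (y : H) ≤ F g := by
      rw [hF]
      simp only [hy, hproj]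
      have h5 := hprojn g
      have hsq := mul_self_le_mul_self (norm_nonneg ((V.orthogonalProjectionOnto g : H))) h5
      nlinarith [hsq]
    have hxsx₀ : F (xs : H) ≤ F (x₀ : H) := hxsmin hx₀K
    by_cases hcase : F (y : H) ≤ F (x₀ : H)
    · exact le_trans (hxsmin ⟨hyC, hcase⟩) hyF
    · push_neg at hcase
      exact le_trans hxsx₀ (le_trans hcase.le hyF)
  have hxsC : T (xs : H) ∈ C := hxsK.1
  refine ⟨(xs : H), by rw [hTapp]; exact hxsC, xs.2, ?_, ?_⟩
  · intro g hg
    rw [hTapp] at hg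
    have := hglobal g hg
    rw [hF] at this
    simpa [hTapp] using this
  · intro g hgC hgmin
    rw [hTapp] at hgC
    -- both are global minimizers with the same value
    have h1 : F (xs : H) ≤ F g := hglobal g hgC
    have h2 : F g ≤ F (xs : H) := by
      have := hgmin (xs : H) (by rw [hTapp]; exact hxsC)
      rw [hTapp g, hTapp (xs : H)] at this
      simpa [hF] using this
    have heq : F g = F (xs : H) := le_antisymm h2 h1
    -- midpoint argument
    set h : H := (1/2 : ℝ) • g + (1/2 : ℝ) • (xs : H) with hh
    have hhC : T h ∈ C := by
      have : T h = (1/2 : ℝ) • T g + (1/2 : ℝ) • T (xs : H) := by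
        simp [hh, map_add, map_smul]
      rw [this]
      exact hCconv hgC hxsC (by norm_num) (by norm_num) (by norm_num)
    have hmin_h : F (xs : H) ≤ F h := hglobal h hhC
    have hlmid : l (T h) ≤ (1/2) * l (T g) + (1/2) * l (T (xs : H)) := by
      have : T h = (1/2 : ℝ) • T g + (1/2 : ℝ) • T (xs : H) := by
        simp [hh, map_add, map_smul]
      rw [this]
      exact hlconv.2 (Set.mem_univ _) (Set.mem_univ _) (by norm_num) (by norm_num) (by norm_num)
    have hpar : ‖g + (xs : H)‖ * ‖g + (xs : H)‖ + ‖g - (xs : H)‖ * ‖g - (xs : H)‖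
        = 2 * (‖g‖ * ‖g‖ + ‖(xs : H)‖ * ‖(xs : H)‖) := parallelogram_law_with_norm_mul ℝ g (xs : H)
    have hhn : ‖h‖ = (1/2) * ‖g + (xs : H)‖ := by
      rw [hh, ← smul_add, norm_smul, Real.norm_eq_abs]
      norm_num
    have hzero : ‖g - (xs : H)‖ = 0 := by
      by_contra hne
      have hpos : 0 < ‖g - (xs : H)‖ := lt_of_le_of_ne (norm_nonneg _) (Ne.symm hne)
      have hsum : ‖g + (xs : H)‖ ^ 2 = 2 * (‖g‖ ^ 2 + ‖(xs : H)‖ ^ 2) - ‖g - (xs : H)‖ ^ 2 := by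
        rw [pow_two, pow_two, pow_two, pow_two]; linarith [hpar]
      have e1 : lam * ‖h‖ ^ 2
          = lam / 4 * (2 * (‖g‖ ^ 2 + ‖(xs : H)‖ ^ 2) - ‖g - (xs : H)‖ ^ 2) := by
        calc lam * ‖h‖ ^ 2 = lam / 4 * ‖g + (xs : H)‖ ^ 2 := by rw [hhn]; ring
          _ = _ := by rw [hsum]
      have hFg := heq
      rw [hF] at hFg
      simp only at hFg
      have hFh : F h ≤ F (xs : H) - (lam / 4) * ‖g - (xs : H)‖ ^ 2 := by
        rw [hF]
        simp only
        linarith [hlmid, e1, hFg]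
      have hcontr : F (xs : H) ≤ F (xs : H) - lam / 4 * ‖g - (xs : H)‖ ^ 2 :=
        le_trans hmin_h hFh
      have hq : (0:ℝ) < lam * ‖g - (xs : H)‖ ^ 2 := mul_pos hlam (pow_pos hpos 2)
      have : lam / 4 * ‖g - (xs : H)‖ ^ 2 ≤ 0 := by linarith
      linarith
    have : g - (xs : H) = 0 := norm_eq_zero.mp hzero
    exact sub_eq_zero.mp this
end

section
/- Let Ω ⊆ ℝⁿ be a convex set containing 0, let f : Ω → ℝⁿ satisfy f(0) = 0 and ‖f(u) − f(v)‖ ≤ L₁‖u − v‖ for all u, v ∈ Ω with L₁ > 0, and let P be a nonzero symmetric real n×n matrix. Let ε ∈ (0,1) and α > 0 satisfy α ≤ ((1 + L₁‖P‖)/(ε + L₁‖P‖))^{1/2} − 1. If z ∈ Ω with z ≠ 0 satisfies zᵀ P f(z) ≤ −‖z‖², then for every x ∈ Ω with ‖x − z‖ < α‖z‖ one has xᵀ P f(x) ≤ −ε‖x‖². -/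
lemma quadF_bound {n : ℕ} (P : Matrix (Fin n) (Fin n) ℝ)
    (x w : EuclideanSpace ℝ (Fin n)) :
    |quadF P x w| ≤ ‖x‖ * (opNorm P * ‖w‖) := by
  have h1 : |quadF P x w| ≤ ‖x‖ * ‖Matrix.toEuclideanLin P w‖ := by
    simpa [quadF] using abs_real_inner_le_norm x (Matrix.toEuclideanLin P w)
  have h2 : ‖Matrix.toEuclideanLin P w‖ ≤ opNorm P * ‖w‖ := by
    have := (Matrix.toEuclideanCLM (𝕜 := ℝ) P).le_opNorm w
    rw [show (Matrix.toEuclideanCLM (𝕜 := ℝ) P) w = Matrix.toEuclideanLin P w from by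
      rw [← Matrix.coe_toEuclideanCLM_eq_toEuclideanLin]; rfl] at this
    exact this
  calc |quadF P x w| ≤ ‖x‖ * ‖Matrix.toEuclideanLin P w‖ := h1
    _ ≤ ‖x‖ * (opNorm P * ‖w‖) := by
        exact mul_le_mul_of_nonneg_left h2 (norm_nonneg x)

lemma quadF_decomp {n : ℕ} (P : Matrix (Fin n) (Fin n) ℝ)
    (x z u v : EuclideanSpace ℝ (Fin n)) :
    quadF P x u = quadF P z v + quadF P x (u - v) + quadF P (x - z) v := by
  simp only [quadF, map_sub, inner_sub_left, inner_sub_right]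
  ring

set_option maxHeartbeats 1000000 in
/-- away-from-origin case of the grid-sufficiency theorem.
Let `Ω ⊆ ℝⁿ` be convex with `0 ∈ Ω`, `f : Ω → ℝⁿ` with `f 0 = 0` and
`L₁`-Lipschitz on `Ω` (`L₁ > 0`), and let `P ≠ 0` be symmetric. Let
`ε ∈ (0,1)` and `α > 0` satisfy `α ≤ ((1 + L₁‖P‖)/(ε + L₁‖P‖))^{1/2} - 1`.
If `z ∈ Ω`, `z ≠ 0` satisfies `zᵀ P f(z) ≤ -‖z‖²`, then every `x ∈ Ω` with
`‖x - z‖ < α ‖z‖` satisfies `xᵀ P f(x) ≤ -ε ‖x‖²`. -/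
theorem away_from_origin_case {n : ℕ}
    (Ω : Set (EuclideanSpace ℝ (Fin n)))
    (hconv : Convex ℝ Ω) (h0 : (0 : EuclideanSpace ℝ (Fin n)) ∈ Ω)
    (f : EuclideanSpace ℝ (Fin n) → EuclideanSpace ℝ (Fin n))
    (hf0 : f 0 = 0)
    (L₁ : ℝ) (hL₁ : 0 < L₁)
    (hlip : ∀ u ∈ Ω, ∀ v ∈ Ω, ‖f u - f v‖ ≤ L₁ * ‖u - v‖)
    (P : Matrix (Fin n) (Fin n) ℝ) (hP : P.IsSymm) (hP0 : P ≠ 0)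
    (ε α : ℝ) (hε0 : 0 < ε) (hε1 : ε < 1) (hα0 : 0 < α)
    (hα : α ≤ Real.sqrt ((1 + L₁ * opNorm P) / (ε + L₁ * opNorm P)) - 1)
    (z : EuclideanSpace ℝ (Fin n)) (hz : z ∈ Ω) (hz0 : z ≠ 0)
    (hzP : quadF P z (f z) ≤ -‖z‖ ^ 2) :
    ∀ x ∈ Ω, ‖x - z‖ < α * ‖z‖ → quadF P x (f x) ≤ -ε * ‖x‖ ^ 2 := by
  intro x hx hxz
  set K : ℝ := L₁ * opNorm P with hKdef
  have hop : 0 ≤ opNorm P := norm_nonneg _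
  have hK : 0 ≤ K := mul_nonneg hL₁.le hop
  have hznorm : 0 < ‖z‖ := norm_pos_iff.mpr hz0
  have hd : ‖x - z‖ ≤ α * ‖z‖ := hxz.le
  have hxnorm : ‖x‖ ≤ (1 + α) * ‖z‖ := by
    have : ‖x‖ ≤ ‖x - z‖ + ‖z‖ := by
      simpa using norm_sub_le (x - z) (-z)
    nlinarith
  have hfz : ‖f z‖ ≤ L₁ * ‖z‖ := by
    have := hlip z hz 0 h0
    simpa [hf0] using this
  have hfx : ‖f x - f z‖ ≤ L₁ * ‖x - z‖ := hlip x hx z hz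
  -- the (1+α)² ≤ (1+K)/(ε+K) inequality
  have hεK : 0 < ε + K := by linarith
  have hsq : (ε + K) * (1 + α) ^ 2 ≤ 1 + K := by
    have h1α : (1 : ℝ) + α ≤ Real.sqrt ((1 + K) / (ε + K)) := by linarith
    have h2 : ((1 : ℝ) + α) ^ 2 ≤ (1 + K) / (ε + K) := by
      have := Real.sq_sqrt (le_of_lt (div_pos (by linarith) hεK)) (x := (1 + K) / (ε + K))
      nlinarith [Real.sqrt_nonneg ((1 + K) / (ε + K))]
    calc (ε + K) * (1 + α) ^ 2 ≤ (ε + K) * ((1 + K) / (ε + K)) :=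
          mul_le_mul_of_nonneg_left h2 hεK.le
      _ = 1 + K := by field_simp
  -- main estimate
  have hdec := quadF_decomp P x z (f x) (f z)
  have hb1 : |quadF P x (f x - f z)| ≤ ‖x‖ * (opNorm P * ‖f x - f z‖) :=
    quadF_bound P x (f x - f z)
  have hb2 : |quadF P (x - z) (f z)| ≤ ‖x - z‖ * (opNorm P * ‖f z‖) :=
    quadF_bound P (x - z) (f z)
  have hQ : quadF P x (f x) ≤ -‖z‖ ^ 2 + K * ((1 + α) * ‖z‖ * (α * ‖z‖)) + K * (α * ‖z‖ * ‖z‖) := by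
    have hdn : 0 ≤ ‖x - z‖ := norm_nonneg (x - z)
    have e1 : quadF P x (f x - f z) ≤ K * (‖x‖ * ‖x - z‖) := by
      have h1 := (abs_le.mp hb1).2
      have h' : ‖x‖ * (opNorm P * ‖f x - f z‖) ≤ ‖x‖ * (opNorm P * (L₁ * ‖x - z‖)) :=
        mul_le_mul_of_nonneg_left (mul_le_mul_of_nonneg_left hfx hop) (norm_nonneg x)
      have he : ‖x‖ * (opNorm P * (L₁ * ‖x - z‖)) = K * (‖x‖ * ‖x - z‖) := by
        rw [hKdef]; ring
      linarith
    have e2 : quadF P (x - z) (f z) ≤ K * (‖x - z‖ * ‖z‖) := by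
      have h2 := (abs_le.mp hb2).2
      have h' : ‖x - z‖ * (opNorm P * ‖f z‖) ≤ ‖x - z‖ * (opNorm P * (L₁ * ‖z‖)) :=
        mul_le_mul_of_nonneg_left (mul_le_mul_of_nonneg_left hfz hop) hdn
      have he : ‖x - z‖ * (opNorm P * (L₁ * ‖z‖)) = K * (‖x - z‖ * ‖z‖) := by
        rw [hKdef]; ring
      linarith
    have p1 : ‖x‖ * ‖x - z‖ ≤ (1 + α) * ‖z‖ * (α * ‖z‖) :=
      mul_le_mul hxnorm hd hdn (by positivity)
    have p2 : ‖x - z‖ * ‖z‖ ≤ α * ‖z‖ * ‖z‖ :=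
      mul_le_mul_of_nonneg_right hd hznorm.le
    have q1 : K * (‖x‖ * ‖x - z‖) ≤ K * ((1 + α) * ‖z‖ * (α * ‖z‖)) :=
      mul_le_mul_of_nonneg_left p1 hK
    have q2 : K * (‖x - z‖ * ‖z‖) ≤ K * (α * ‖z‖ * ‖z‖) :=
      mul_le_mul_of_nonneg_left p2 hK
    linarith
  have hcoef : ε * (1 + α) ^ 2 + K * (α * (1 + α) + α) - 1 ≤ 0 := by nlinarith [hsq]
  have hx2 : ‖x‖ ^ 2 ≤ ((1 + α) * ‖z‖) ^ 2 := by
    have h0x : 0 ≤ ‖x‖ := norm_nonneg x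
    nlinarith
  have h1 : ε * ‖x‖ ^ 2 ≤ ε * ((1 + α) * ‖z‖) ^ 2 :=
    mul_le_mul_of_nonneg_left hx2 hε0.le
  have h2 : (ε * (1 + α) ^ 2 + K * (α * (1 + α) + α) - 1) * ‖z‖ ^ 2 ≤ 0 :=
    mul_nonpos_of_nonpos_of_nonneg hcoef (sq_nonneg _)
  nlinarith [h1, h2, hQ]
end
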